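/- Let c < −1 be real and set z₀ = −c − √(c²−1). Then 0 < z₀ < 1, and there exists a unique ζ₀ ∈ (0,1) satisfying ζ₀ − ζ₀⁻¹ + 2c·log ζ₀ = 0; moreover this ζ₀ satisfies 0 < ζ₀ < z₀ < 1. -/

import Mathlib

open Real Set

/-- For `c < -1` and `z₀ = -c - √(c²-1)` one has `0 < z₀ < 1`, and there is a unique
`ζ₀ ∈ (0,1)` with `ζ₀ - ζ₀⁻¹ + 2c log ζ₀ = 0`; moreover `0 < ζ₀ < z₀ < 1`. -/
theorem stationary_point_order_left (c : ℝ) (hc : c < -1) :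
    0 < -c - Real.sqrt (c ^ 2 - 1) ∧ -c - Real.sqrt (c ^ 2 - 1) < 1 ∧
      ∃ ζ₀ : ℝ, (ζ₀ ∈ Set.Ioo (0 : ℝ) 1 ∧ ζ₀ - ζ₀⁻¹ + 2 * c * Real.log ζ₀ = 0) ∧
        (∀ ζ : ℝ, ζ ∈ Set.Ioo (0 : ℝ) 1 ∧ ζ - ζ⁻¹ + 2 * c * Real.log ζ = 0 → ζ = ζ₀) ∧
        0 < ζ₀ ∧ ζ₀ < -c - Real.sqrt (c ^ 2 - 1) := by
  have hc2 : (1:ℝ) ≤ c ^ 2 - 1 + 1 := by nlinarith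
  have hs0 : 0 ≤ Real.sqrt (c ^ 2 - 1) := Real.sqrt_nonneg _
  have hs2 : Real.sqrt (c ^ 2 - 1) ^ 2 = c ^ 2 - 1 := Real.sq_sqrt (by nlinarith)
  set s := Real.sqrt (c ^ 2 - 1) with hs_def
  set z₀ := -c - s with hz₀_def
  set z₁ := -c + s with hz₁_def
  have hs_lt : s < -c := by nlinarith
  have hz0pos : 0 < z₀ := by simp only [hz₀_def]; linarith
  have hs_gt : -c - 1 < s := by nlinarith
  have hz0lt1 : z₀ < 1 := by simp only [hz₀_def]; linarith
  have hz1 : 1 < z₁ := by simp only [hz₁_def]; linarith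
  have hquad : ∀ x : ℝ, x ^ 2 + 2 * c * x + 1 = (x - z₀) * (x - z₁) := by
    intro x
    have h : z₀ * z₁ = 1 := by simp only [hz₀_def, hz₁_def]; nlinarith
    have h2 : z₀ + z₁ = -2 * c := by simp only [hz₀_def, hz₁_def]; ring
    linear_combination x * h2 - h
  set f : ℝ → ℝ := fun x => x - x⁻¹ + 2 * c * Real.log x with hf_def
  have hderiv : ∀ x : ℝ, 0 < x →
      HasDerivAt f ((x ^ 2 + 2 * c * x + 1) / x ^ 2) x := by
    intro x hx
    have h1 : HasDerivAt f (1 - (-(x ^ 2)⁻¹) + 2 * c * x⁻¹) x :=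
      ((hasDerivAt_id x).sub (hasDerivAt_inv hx.ne')).add
        ((Real.hasDerivAt_log hx.ne').const_mul (2 * c))
    convert h1 using 1
    field_simp
    ring
  have hcont : ∀ x : ℝ, 0 < x → ContinuousAt f x := fun x hx => (hderiv x hx).continuousAt
  -- f is strictly decreasing on [z₀, 1]
  have hanti : StrictAntiOn f (Icc z₀ 1) := by
    apply strictAntiOn_of_deriv_neg (convex_Icc _ _)
    · exact fun x hx => (hcont x (hz0pos.trans_le hx.1)).continuousWithinAt
    · intro x hx
      rw [interior_Icc] at hx
      have hxpos : 0 < x := hz0pos.trans hx.1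
      rw [(hderiv x hxpos).deriv]
      apply div_neg_of_neg_of_pos _ (by positivity)
      nlinarith [hquad x, mul_pos (sub_pos.mpr hx.1) (sub_pos.mpr (hx.2.trans hz1))]
  -- f is strictly increasing on (0, z₀]
  have hmono : StrictMonoOn f (Ioc 0 z₀) := by
    apply strictMonoOn_of_deriv_pos (convex_Ioc _ _)
    · exact fun x hx => (hcont x hx.1).continuousWithinAt
    · intro x hx
      rw [interior_Ioc] at hx
      rw [(hderiv x hx.1).deriv]
      apply div_pos _ (pow_pos hx.1 2)
      nlinarith [hquad x, mul_pos (sub_pos.mpr hx.2) (sub_pos.mpr (hx.2.trans (hz0lt1.trans hz1)))]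
  have hf1 : f 1 = 0 := by simp [hf_def]
  have hfz0 : 0 < f z₀ := by
    have := hanti ⟨le_refl _, hz0lt1.le⟩ ⟨hz0lt1.le, le_refl _⟩ hz0lt1
    rw [hf1] at this; exact this
  -- value at x₁ = exp (4c) is negative
  set x₁ := Real.exp (4 * c) with hx₁_def
  have hx₁pos : 0 < x₁ := Real.exp_pos _
  have hexp_lb : (1 - c)^4 ≤ Real.exp (-(4 * c)) := by
    have h1 : 1 - c ≤ Real.exp (-c) := by
      have := Real.add_one_le_exp (-c); linarith
    have h2 : Real.exp (-(4 * c)) = Real.exp (-c) ^ 4 := by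
      rw [← Real.exp_nat_mul]; norm_num
    rw [h2]
    have : (0:ℝ) ≤ 1 - c := by linarith
    exact pow_le_pow_left₀ this h1 4
  have hfx₁ : f x₁ < 0 := by
    have hlog : Real.log x₁ = 4 * c := Real.log_exp _
    have hinv : x₁⁻¹ = Real.exp (-(4 * c)) := by
      rw [hx₁_def, ← Real.exp_neg]
    have hbig : Real.exp (4 * c) + 8 * c ^ 2 < Real.exp (-(4 * c)) := by
      have h1 : Real.exp (4 * c) < 1 := Real.exp_lt_one_iff.mpr (by linarith)
      have h2 : 1 + 8 * c ^ 2 < (1 - c) ^ 4 := by nlinarith [sq_nonneg (c + 1), sq_nonneg c, sq_nonneg (c^2 + c)]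
      linarith [hexp_lb]
    simp only [hf_def]
    rw [hlog, hinv]
    simp only [hx₁_def]
    nlinarith [hbig]
  have hx₁lt : x₁ < z₀ := by
    -- exp(4c) < z₀ since z₀ * z₁ = 1 and z₁ < -2c, so z₀ > 1/(-2c); and exp(-4c) > -2c
    have hzz : z₀ * z₁ = 1 := by simp only [hz₀_def, hz₁_def]; nlinarith
    have hz1lt : z₁ < -2 * c := by simp only [hz₁_def]; linarith
    have h2c : (0:ℝ) < -2 * c := by linarith
    have hz0gt : 1 < z₀ * (-2 * c) := by
      nlinarith [mul_lt_mul_of_pos_left hz1lt hz0pos, hzz]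
    have hexp : -2 * c < Real.exp (-(4 * c)) := by
      have := Real.add_one_le_exp (-(4 * c)); linarith
    have hlt : x₁ * (-2 * c) < 1 := by
      have h := Real.exp_pos (4 * c)
      calc x₁ * (-2 * c) < x₁ * Real.exp (-(4 * c)) := by
            exact mul_lt_mul_of_pos_left hexp h
        _ = 1 := by rw [hx₁_def, ← Real.exp_add]; norm_num
    exact (mul_lt_mul_iff_left₀ h2c).mp (hlt.trans hz0gt)
  -- IVT
  have hconIcc : ContinuousOn f (Icc x₁ z₀) :=
    fun x hx => (hcont x (hx₁pos.trans_le hx.1)).continuousWithinAt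
  have hIVT := intermediate_value_Ioo hx₁lt.le hconIcc
  have h0mem : (0:ℝ) ∈ Ioo (f x₁) (f z₀) := ⟨hfx₁, hfz0⟩
  obtain ⟨ζ₀, hζ₀mem, hζ₀eq⟩ := hIVT h0mem
  have hζ₀pos : 0 < ζ₀ := hx₁pos.trans hζ₀mem.1
  have hζ₀lt : ζ₀ < z₀ := hζ₀mem.2
  refine ⟨hz0pos, hz0lt1, ζ₀, ⟨⟨hζ₀pos, hζ₀lt.trans hz0lt1⟩, hζ₀eq⟩, ?_, hζ₀pos, hζ₀lt⟩
  intro ζ ⟨hζmem, hζeq⟩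
  -- any zero in (0,1) is < z₀
  have hζlt : ζ < z₀ := by
    by_contra h
    push_neg at h
    have := hanti ⟨h, hζmem.2.le⟩ ⟨hz0lt1.le, le_refl _⟩ hζmem.2
    rw [hf1] at this
    have : f ζ > 0 := this
    simp only [hf_def] at this
    linarith [hζeq, this]
  exact hmono.injOn ⟨hζmem.1, hζlt.le⟩ ⟨hζ₀pos, hζ₀lt.le⟩ (by show f ζ = f ζ₀; rw [hζ₀eq]; exact hζeq)
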